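/- With the distribution μ from the previous construction (support points 2^{2-λ_k-ε}, probabilities p_k as defined), in the limit ε → 0 the expectation satisfies E_{z∼μ}[z] = 2^{2-λ_0}(∑_{j<n} 2^{λ_{j+1}-λ_j} - n), where λ_n = λ_0 + 1. Consequently each schedule X(λ_k) has consistency E[z]/E[ℓ] = 4(∑_{j<n} 2^{λ_{j+1}-λ_j} - n) ≥ 4n(2^{1/n} - 1). -/

import Mathlib

open Filter

/-- With the distribution `μ` of the lower-bound construction (support points
`2^{2-λ_k-ε}`, probabilities `p_k = 2^{λ_{k+1}-λ_0} - 2^{λ_k-λ_0}` for `k < n-1`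
and `p_{n-1} = 2 - 2^{λ_{n-1}-λ_0}`, where `λ_n = λ_0 + 1`): in the limit `ε → 0⁺`
the expectation `E_{z∼μ}[z]` equals `2^{2-λ_0}(∑_{j<n} 2^{λ_{j+1}-λ_j} - n)`;
consequently, since each schedule `X(λ_k)` has expected profit `2^{-λ_0}`, its
consistency equals `4(∑_{j<n} 2^{λ_{j+1}-λ_j} - n)`, which is at least
`4n(2^{1/n} - 1)`. -/
theorem stmt_18 (n : ℕ) (hn : 0 < n) (L : ℕ → ℝ)
    (h0 : 0 ≤ L 0)
    (hmono : ∀ j, j + 1 < n → L j < L (j + 1))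
    (hlast : L (n - 1) < 1)
    (hend : L n = L 0 + 1)
    (p : ℕ → ℝ)
    (hp : ∀ k, k + 1 < n → p k = (2 : ℝ) ^ (L (k + 1) - L 0) - (2 : ℝ) ^ (L k - L 0))
    (hplast : p (n - 1) = 2 - (2 : ℝ) ^ (L (n - 1) - L 0)) :
    Tendsto
        (fun ε : ℝ => ∑ k ∈ Finset.range n, p k * (2 : ℝ) ^ ((2 : ℝ) - L k - ε))
        (nhdsWithin 0 (Set.Ioi 0))
        (nhds ((2 : ℝ) ^ ((2 : ℝ) - L 0) *
          (∑ j ∈ Finset.range n, (2 : ℝ) ^ (L (j + 1) - L j) - n))) ∧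
      ((2 : ℝ) ^ ((2 : ℝ) - L 0) *
          (∑ j ∈ Finset.range n, (2 : ℝ) ^ (L (j + 1) - L j) - n)) /
            (2 : ℝ) ^ (-(L 0))
        = 4 * (∑ j ∈ Finset.range n, (2 : ℝ) ^ (L (j + 1) - L j) - n) ∧
      4 * (∑ j ∈ Finset.range n, (2 : ℝ) ^ (L (j + 1) - L j) - n)
        ≥ 4 * (n : ℝ) * ((2 : ℝ) ^ (1 / (n : ℝ)) - 1) := by
  have two_pos : (0:ℝ) < 2 := by norm_num
  -- key pointwise identity
  have key : ∀ k ∈ Finset.range n,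
      p k * (2 : ℝ) ^ ((2 : ℝ) - L k) =
        (2 : ℝ) ^ ((2 : ℝ) - L 0) * ((2 : ℝ) ^ (L (k + 1) - L k) - 1) := by
    intro k hk
    rw [Finset.mem_range] at hk
    have hpk : p k = (2 : ℝ) ^ (L (k + 1) - L 0) - (2 : ℝ) ^ (L k - L 0) := by
      rcases lt_or_ge (k + 1) n with h | h
      · exact hp k h
      · have hk1 : k = n - 1 := by omega
        have hkn : k + 1 = n := by omega
        rw [hk1, ← hk1, hkn, hend]
        have : L 0 + 1 - L 0 = 1 := by ring
        rw [this, Real.rpow_one, hk1, hplast]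
    rw [hpk]
    rw [sub_mul, ← Real.rpow_add two_pos, ← Real.rpow_add two_pos,
      mul_sub, ← Real.rpow_add two_pos, mul_one]
    ring_nf
  have value : ∑ k ∈ Finset.range n, p k * (2 : ℝ) ^ ((2 : ℝ) - L k) =
      (2 : ℝ) ^ ((2 : ℝ) - L 0) *
        (∑ j ∈ Finset.range n, (2 : ℝ) ^ (L (j + 1) - L j) - n) := by
    rw [Finset.sum_congr rfl key, ← Finset.mul_sum, Finset.sum_sub_distrib,
      Finset.sum_const, Finset.card_range]
    push_cast
    ring
  refine ⟨?_, ?_, ?_⟩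
  · have hc : ContinuousAt
        (fun ε : ℝ => ∑ k ∈ Finset.range n, p k * (2 : ℝ) ^ ((2 : ℝ) - L k - ε)) 0 :=
      tendsto_finset_sum _ fun k _ =>
        continuousAt_const.mul
          ((Real.continuousAt_const_rpow (by norm_num : (2:ℝ) ≠ 0)).comp
            (continuousAt_const.sub continuousAt_id))
    have hcw := hc.continuousWithinAt (s := Set.Ioi 0)
    rw [← value]
    simpa [ContinuousWithinAt] using hcw
  · rw [div_eq_iff (by positivity : ((2:ℝ) ^ (-(L 0))) ≠ 0)]
    rw [show (4:ℝ) = (2:ℝ)^((2:ℝ)) by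
      rw [show ((2:ℝ):ℝ) = ((2:ℕ):ℝ) by norm_num, Real.rpow_natCast]; norm_num]
    rw [mul_comm ((2:ℝ)^((2:ℝ))) _, mul_assoc, ← Real.rpow_add two_pos]
    exact mul_comm _ _
  · -- Jensen: exp is convex
    have hsum : ∑ j ∈ Finset.range n, (L (j + 1) - L j) = 1 := by
      rw [Finset.sum_range_sub, hend]; ring
    have hnn : (0:ℝ) < n := by exact_mod_cast hn
    have jensen := convexOn_exp.map_sum_le (t := Finset.range n)
      (w := fun _ => (1:ℝ) / n) (p := fun j => (L (j+1) - L j) * Real.log 2)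
      (fun i _ => by positivity)
      (by rw [Finset.sum_const, Finset.card_range, nsmul_eq_mul, mul_one_div_cancel hnn.ne'])
      (fun i _ => Set.mem_univ _)
    simp only [smul_eq_mul] at jensen
    have hrw : ∀ x : ℝ, (2:ℝ) ^ x = Real.exp (x * Real.log 2) := by
      intro x; rw [Real.rpow_def_of_pos two_pos, mul_comm]
    have hL : ∑ i ∈ Finset.range n, (1:ℝ)/n * ((L (i+1) - L i) * Real.log 2)
        = 1/(n:ℝ) * Real.log 2 := by
      rw [← Finset.mul_sum, ← Finset.sum_mul, hsum]; ring
    rw [hL] at jensen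
    have hl : Real.exp (1/(n:ℝ) * Real.log 2) = (2:ℝ) ^ (1/(n:ℝ)) := by
      rw [hrw]
    rw [hl] at jensen
    have h2 : ∑ i ∈ Finset.range n, (1:ℝ)/n * Real.exp ((L (i+1) - L i) * Real.log 2)
        = (1/(n:ℝ)) * ∑ j ∈ Finset.range n, (2:ℝ) ^ (L (j+1) - L j) := by
      rw [← Finset.mul_sum]
      congr 1
      exact Finset.sum_congr rfl fun i _ => (hrw _).symm
    rw [h2] at jensen
    have key3 : (n:ℝ) * (2:ℝ) ^ (1/(n:ℝ)) ≤ ∑ j ∈ Finset.range n, (2:ℝ) ^ (L (j+1) - L j) := by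
      have := mul_le_mul_of_nonneg_left jensen (le_of_lt hnn)
      calc (n:ℝ) * (2:ℝ) ^ (1/(n:ℝ)) ≤ (n:ℝ) * ((1/(n:ℝ)) * ∑ j ∈ Finset.range n, (2:ℝ) ^ (L (j+1) - L j)) := this
        _ = ∑ j ∈ Finset.range n, (2:ℝ) ^ (L (j+1) - L j) := by rw [← mul_assoc, mul_one_div_cancel hnn.ne', one_mul]
    nlinarith [key3]
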